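/- arXiv:1808.09687 — 2 statements merged into one kernel-verified Lean document; each statement's English description precedes it below -/
import Mathlib

section
/- Let n₁, n₂ ≥ 2 and work in ℝ^{n₁+n₂} = ℝ^{n₁} × ℝ^{n₂}, with P¹ = ℝ^{n₁} × {0}, P² = {0} × ℝ^{n₂} and orthogonal projections p¹, p². For unit vectors x, y ∈ ℝ^{n₁+n₂}, the following are equivalent: (i) |x∧y| = 1 and |p¹(x)∧p¹(y)| + |p²(x)∧p²(y)| = 1; (ii) there exist α ∈ [0,π/2], unit vectors u₁, u₂ ∈ P¹ with u₁ ⊥ u₂, and unit vectors v₁, v₂ ∈ P² with v₁ ⊥ v₂, such that x = cos α·u₁ + sin α·v₁ and y = cos α·u₂ + sin α·v₂. -/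
open Set Metric MeasureTheory Filter Pointwise
open scoped ENNReal RealInnerProductSpace NNReal

noncomputable section

/-- `Euc n` is the Euclidean space `ℝⁿ`. -/
abbrev Euc (n : ℕ) : Type := EuclideanSpace ℝ (Fin n)

variable {n : ℕ}

/-- A cone centered at `0`. -/
def IsCone0 (C : Set (Euc n)) : Prop :=
  (0 : Euc n) ∈ C ∧ ∀ t : ℝ, 0 < t → t • C = C

/-- `f` is (the time-one map of) a Lipschitz deformation in the set `U`. -/
def IsDeformationIn (U : Set (Euc n)) (f : Euc n → Euc n) : Prop :=
  ∃ φ : ℝ → Euc n → Euc n,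
    (∀ x ∈ U, φ 0 x = x) ∧
    (∀ t ∈ Icc (0:ℝ) 1, MapsTo (φ t) U U) ∧
    ContinuousOn (fun p : ℝ × Euc n => φ p.1 p.2) (Icc (0:ℝ) 1 ×ˢ U) ∧
    (∃ L : ℝ≥0, LipschitzOnWith L (φ 1) U) ∧
    (∀ x ∈ U, φ 1 x = f x) ∧
    closure (⋃ t ∈ Icc (0:ℝ) 1,
        ({x ∈ U | φ t x ≠ x} ∪ φ t '' {x ∈ U | φ t x ≠ x})) ⊆ U ∧
    IsCompact (closure (⋃ t ∈ Icc (0:ℝ) 1,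
        ({x ∈ U | φ t x ≠ x} ∪ φ t '' {x ∈ U | φ t x ≠ x})))

/-- `E` is a `d`-dimensional Almgren minimal set in the open set `U`
(`E ⊆ U` relatively closed). -/
def IsAlmgrenMinimalIn (d : ℕ) (U E : Set (Euc n)) : Prop :=
  E ⊆ U ∧ closure E ∩ U ⊆ E ∧
  (∀ (x : Euc n) (r : ℝ), closedBall x r ⊆ U → μH[(d:ℝ)] (E ∩ closedBall x r) < ⊤) ∧
  ∀ f : Euc n → Euc n, IsDeformationIn U f →
    μH[(d:ℝ)] (E \ f '' E) ≤ μH[(d:ℝ)] (f '' E \ E)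

/-- A set is reduced if it has positive `H^d` measure in every ball centered on it. -/
def IsReducedSet (d : ℕ) (E : Set (Euc n)) : Prop :=
  ∀ x ∈ E, ∀ r : ℝ, 0 < r → 0 < μH[(d:ℝ)] (E ∩ ball x r)

/-- A (reduced) `d`-dimensional Almgren minimal cone in `ℝⁿ`. -/
def IsAlmgrenMinimalCone (d : ℕ) (C : Set (Euc n)) : Prop :=
  IsClosed C ∧ IsCone0 C ∧ IsReducedSet d C ∧ IsAlmgrenMinimalIn d univ C

/-- The class `F(E,U)` of deformations of `E` in `U`. -/
def deformClass (U E : Set (Euc n)) : Set (Set (Euc n)) :=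
  {F | ∃ f, IsDeformationIn U f ∧ F = (E \ U) ∪ f '' (E ∩ U)}

/-- Convergence in local Hausdorff distance on every compact set. -/
def LocHausTendsto (S : ℕ → Set (Euc n)) (F : Set (Euc n)) : Prop :=
  ∀ K : Set (Euc n), IsCompact K →
    Tendsto (fun k => (⨆ y ∈ S k ∩ K, infDist y F) ⊔ (⨆ y ∈ F ∩ K, infDist y (S k)))
      atTop (nhds 0)

/-- The class `F̄(E,U)` of limits of deformations of `E` in `U`. -/
def limDeformClass (d : ℕ) (U E : Set (Euc n)) : Set (Set (Euc n)) :=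
  {F | F ⊆ closure U ∧ IsClosed F ∧
    (∃ S : ℕ → Set (Euc n), (∀ k, S k ∈ deformClass U E) ∧ LocHausTendsto S F) ∧
    (∀ (x : Euc n) (r : ℝ), μH[(d:ℝ)] (F ∩ closedBall x r) < ⊤) ∧
    μH[(d:ℝ)] ((F ∩ frontier U) \ E) = 0}

/-- `C` is Almgren unique in the domain `U`. -/
def AlmgrenUniqueIn (d : ℕ) (C U : Set (Euc n)) : Prop :=
  ∀ E ∈ limDeformClass d U C,
    μH[(d:ℝ)] E = (⨅ F ∈ limDeformClass d U C, μH[(d:ℝ)] F) → E = C ∩ closure U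

/-- `C` is Almgren unique (in every domain). -/
def AlmgrenUnique (d : ℕ) (C : Set (Euc n)) : Prop :=
  ∀ U : Set (Euc n), IsOpen U → IsConnected U → AlmgrenUniqueIn d C U

/-- `F` is a `δ`-sliding deformation of `E` in `cl(U)`. -/
def IsSlidingDeformation (δ : ℝ) (U E F : Set (Euc n)) : Prop :=
  ∃ φ : ℝ → Euc n → Euc n,
    (∀ x ∈ closure U, φ 0 x = x) ∧
    (∀ t ∈ Icc (0:ℝ) 1, MapsTo (φ t) (closure U) (closure U)) ∧
    ContinuousOn (fun p : ℝ × Euc n => φ p.1 p.2) (Icc (0:ℝ) 1 ×ˢ closure U) ∧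
    (∃ L : ℝ≥0, LipschitzOnWith L (φ 1) (closure U)) ∧
    (∀ t ∈ Icc (0:ℝ) 1, MapsTo (φ t) (frontier U) (frontier U)) ∧
    (∀ t ∈ Icc (0:ℝ) 1, ∀ x ∈ E ∩ frontier U, ‖φ t x - x‖ < δ) ∧
    F = φ 1 '' E

/-- The class `F̄_δ(E, cl U)` of limits of `δ`-sliding deformations of `E`. -/
def slidingLimClass (d : ℕ) (δ : ℝ) (U E : Set (Euc n)) : Set (Set (Euc n)) :=
  {F | F ⊆ closure U ∧ IsClosed F ∧
    (∃ S : ℕ → Set (Euc n), (∀ k, IsSlidingDeformation δ U E (S k)) ∧ LocHausTendsto S F) ∧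
    (∀ (x : Euc n) (r : ℝ), μH[(d:ℝ)] (F ∩ closedBall x r) < ⊤) ∧
    μH[(d:ℝ)] ((F ∩ frontier U) \ E) = 0}

/-- `E` is `δ`-sliding minimal in `cl(U)`. -/
def IsSlidingMinimal (d : ℕ) (δ : ℝ) (U E : Set (Euc n)) : Prop :=
  ∀ F ∈ slidingLimClass d δ U E, μH[(d:ℝ)] (E \ F) ≤ μH[(d:ℝ)] (F \ E)

/-- The trace of a cone on the unit sphere. -/
def spherePart (K : Set (Euc n)) : Set (Euc n) := K ∩ sphere (0 : Euc n) 1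

/-- A point of `K ∩ ∂B(0,1)` at which the net `K ∩ ∂B(0,1)` is not locally
homeomorphic to an interval (a `Y` point of the net). -/
def IsYPoint (K : Set (Euc n)) (a : Euc n) : Prop :=
  a ∈ spherePart K ∧
  ¬ ∃ W : Set (Euc n), IsOpen W ∧ a ∈ W ∧
      Nonempty ((spherePart K ∩ W : Set (Euc n)) ≃ₜ (Set.Ioo (0:ℝ) 1))

/-- The convex domain `U(K,η)` associated to a `2`-dimensional minimal cone `K`. -/
def UDomain (K : Set (Euc n)) (η : ℝ) : Set (Euc n) :=
  {x ∈ ball (0 : Euc n) 1 |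
    (∀ y ∈ spherePart K, ⟪x, y⟫ < 1 - η) ∧
    (∀ a : Euc n, IsYPoint K a → ⟪x, a⟫ < 1 - 2 * η)}

/-- `K` is sliding stable: for some small `η` and some `δ > 0`, `K` is
`δ`-sliding minimal in `cl(U(K,η))`. -/
def SlidingStable (d : ℕ) (K : Set (Euc n)) : Prop :=
  ∃ η δ : ℝ, 0 < η ∧ η < 1 / 100 ∧ 0 < δ ∧
    IsSlidingMinimal d δ (UDomain K η) (K ∩ closure (UDomain K η))

/-- The minimal angle between two cones: the largest `θ ∈ [0,π/2]` such that
`|⟨u,v⟩| ≤ cos θ‖u‖‖v‖` for all `u ∈ A`, `v ∈ B`. -/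
def minAngle (A B : Set (Euc n)) : ℝ :=
  sSup {θ : ℝ | θ ∈ Icc 0 (Real.pi / 2) ∧
    ∀ u ∈ A, ∀ v ∈ B, |⟪u, v⟫| ≤ Real.cos θ * (‖u‖ * ‖v‖)}

/-- `|x₁ ∧ ⋯ ∧ x_d|`: the `d`-volume of the parallelepiped spanned by `x₁,…,x_d`,
i.e. the square root of the Gram determinant. -/
def wedgeNorm {d : ℕ} (x : Fin d → Euc n) : ℝ :=
  Real.sqrt (Matrix.det (Matrix.of fun i j => ⟪x i, x j⟫))

/-- The isometric inclusion `ℝ^{n₁} → ℝ^{n₁} × {0} ⊆ ℝ^{n₁+n₂}`. -/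
def pad1 (n₁ n₂ : ℕ) (x : Euc n₁) : Euc (n₁ + n₂) :=
  (EuclideanSpace.equiv (Fin (n₁ + n₂)) ℝ).symm
    (fun i => if h : (i : ℕ) < n₁ then x ⟨i, h⟩ else 0)

/-- The isometric inclusion `ℝ^{n₂} → {0} × ℝ^{n₂} ⊆ ℝ^{n₁+n₂}`. -/
def pad2 (n₁ n₂ : ℕ) (x : Euc n₂) : Euc (n₁ + n₂) :=
  (EuclideanSpace.equiv (Fin (n₁ + n₂)) ℝ).symm
    (fun i => if _ : (i : ℕ) < n₁ then 0 else x ⟨(i : ℕ) - n₁, by omega⟩)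

/-- The orthogonal union `E₁ ∪⊥ E₂ = (E₁ × {0}) ∪ ({0} × E₂) ⊆ ℝ^{n₁+n₂}`. -/
def orthUnion (n₁ n₂ : ℕ) (E₁ : Set (Euc n₁)) (E₂ : Set (Euc n₂)) : Set (Euc (n₁ + n₂)) :=
  pad1 n₁ n₂ '' E₁ ∪ pad2 n₁ n₂ '' E₂

/-- The projection `ℝ^{n₁+n₂} → ℝ^{n₁}` on the first factor. -/
def proj1 (n₁ n₂ : ℕ) (x : Euc (n₁ + n₂)) : Euc n₁ :=
  (EuclideanSpace.equiv (Fin n₁) ℝ).symm fun i => x (Fin.castAdd n₂ i)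

/-- The projection `ℝ^{n₁+n₂} → ℝ^{n₂}` on the second factor. -/
def proj2 (n₁ n₂ : ℕ) (x : Euc (n₁ + n₂)) : Euc n₂ :=
  (EuclideanSpace.equiv (Fin n₂) ℝ).symm fun i => x (Fin.natAdd n₁ i)

/-- Orthogonal projection of `ℝ^{n₁+n₂}` onto `P¹ = ℝ^{n₁} × {0}`. -/
def projTo1 (n₁ n₂ : ℕ) (x : Euc (n₁ + n₂)) : Euc (n₁ + n₂) := pad1 n₁ n₂ (proj1 n₁ n₂ x)

/-- Orthogonal projection of `ℝ^{n₁+n₂}` onto `P² = {0} × ℝ^{n₂}`. -/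
def projTo2 (n₁ n₂ : ℕ) (x : Euc (n₁ + n₂)) : Euc (n₁ + n₂) := pad2 n₁ n₂ (proj2 n₁ n₂ x)

/-- `T` is the approximate tangent `d`-plane of `F` at `x`. -/
def IsApproxTangent (d : ℕ) (F : Set (Euc n)) (x : Euc n) (T : Submodule ℝ (Euc n)) : Prop :=
  Module.finrank ℝ T = d ∧
  0 < Filter.limsup (fun r : ℝ => μH[(d:ℝ)] (F ∩ ball x r) / ENNReal.ofReal (r ^ d))
      (nhdsWithin 0 (Ioi 0)) ∧
  ∀ ε : ℝ, 0 < ε →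
    Tendsto (fun r : ℝ =>
        μH[(d:ℝ)] ((F ∩ ball x r) ∩ {y | ε * ‖y - x‖ < infDist (y - x) (T : Set (Euc n))}) /
          ENNReal.ofReal (r ^ d))
      (nhdsWithin 0 (Ioi 0)) (nhds 0)

/-- `F` is `d`-rectifiable. -/
def IsRectifiable (d : ℕ) (F : Set (Euc n)) : Prop :=
  ∃ f : ℕ → (Euc d → Euc n),
    (∀ k, ∃ L : ℝ≥0, LipschitzWith L (f k)) ∧
    μH[(d:ℝ)] (F \ ⋃ k, range (f k)) = 0

/-- Orthogonal projection onto a submodule, as a map of the ambient space. -/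
def oproj (P : Submodule ℝ (Euc n)) (v : Euc n) : Euc n :=
  (P.orthogonalProjection v : Euc n)

/-- A nonzero vector `z` has angle `α` between `P¹` and `P²`. -/
def HasAngleBetween (P₁ P₂ : Submodule ℝ (Euc n)) (α : ℝ) (z : Euc n) : Prop :=
  ‖oproj P₁ z‖ = Real.cos α * ‖z‖ ∧ ‖oproj P₂ z‖ = Real.sin α * ‖z‖

/-- `T` is a `d`-analytic subspace between `P¹` and `P²` with angle `α`. -/
def IsAnalyticSubspace (P₁ P₂ : Submodule ℝ (Euc n)) (α : ℝ) (T : Submodule ℝ (Euc n)) : Prop :=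
  ∀ z ∈ T, z ≠ 0 → HasAngleBetween P₁ P₂ α z

/-- The point `(a,b) ∈ ℝ²`. -/
def mk2 (a b : ℝ) : Euc 2 := (EuclideanSpace.equiv (Fin 2) ℝ).symm ![a, b]

/-- The sector `R_α = {(r,θ) : r₀ ≤ r ≤ 1, 0 ≤ θ ≤ π/α}` (polar coordinates). -/
def sectorR (α : ℕ) (r₀ : ℝ) : Set (Euc 2) :=
  {x | ∃ r θ : ℝ, r₀ ≤ r ∧ r ≤ 1 ∧ 0 ≤ θ ∧ θ ≤ Real.pi / α ∧
    x = mk2 (r * Real.cos θ) (r * Real.sin θ)}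

/-- The inner arc `L_α = {(r₀,θ) : 0 ≤ θ ≤ π/α}`. -/
def sectorL (α : ℕ) (r₀ : ℝ) : Set (Euc 2) :=
  {x | ∃ θ : ℝ, 0 ≤ θ ∧ θ ≤ Real.pi / α ∧
    x = mk2 (r₀ * Real.cos θ) (r₀ * Real.sin θ)}

/-- The outer arc `K_α = {(1,θ) : 0 ≤ θ ≤ π/α}`. -/
def sectorK (α : ℕ) : Set (Euc 2) :=
  {x | ∃ θ : ℝ, 0 ≤ θ ∧ θ ≤ Real.pi / α ∧ x = mk2 (Real.cos θ) (Real.sin θ)}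

/-- The annular sector `{(r,θ) : s/4 ≤ r ≤ 2s, 0 ≤ θ ≤ θ₀}`. -/
def annR (θ₀ s : ℝ) : Set (Euc 2) :=
  {x | ∃ r θ : ℝ, s / 4 ≤ r ∧ r ≤ 2 * s ∧ 0 ≤ θ ∧ θ ≤ θ₀ ∧
    x = mk2 (r * Real.cos θ) (r * Real.sin θ)}

/-- The annular sector `{(r,θ) : s/4 ≤ r ≤ s, 0 ≤ θ ≤ θ₀}`. -/
def annR' (θ₀ s : ℝ) : Set (Euc 2) :=
  {x | ∃ r θ : ℝ, s / 4 ≤ r ∧ r ≤ s ∧ 0 ≤ θ ∧ θ ≤ θ₀ ∧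
    x = mk2 (r * Real.cos θ) (r * Real.sin θ)}


section Helpers

variable {n₁ n₂ : ℕ}

lemma pad1_apply (u : Euc n₁) (i : Fin (n₁+n₂)) :
    pad1 n₁ n₂ u i = if h : (i:ℕ) < n₁ then u ⟨i,h⟩ else 0 := rfl
lemma pad2_apply (v : Euc n₂) (i : Fin (n₁+n₂)) :
    pad2 n₁ n₂ v i = if _ : (i:ℕ) < n₁ then 0 else v ⟨(i:ℕ) - n₁, by omega⟩ := rfl
lemma proj1_apply (x : Euc (n₁+n₂)) (i : Fin n₁) : proj1 n₁ n₂ x i = x (Fin.castAdd n₂ i) := rfl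
lemma proj2_apply (x : Euc (n₁+n₂)) (i : Fin n₂) : proj2 n₁ n₂ x i = x (Fin.natAdd n₁ i) := rfl

lemma pad1_castAdd (u : Euc n₁) (i : Fin n₁) : pad1 n₁ n₂ u (Fin.castAdd n₂ i) = u i := by
  rw [pad1_apply, dif_pos (by simpa using i.isLt)]; exact congrArg u (Fin.ext rfl)
lemma pad1_natAdd (u : Euc n₁) (i : Fin n₂) : pad1 n₁ n₂ u (Fin.natAdd n₁ i) = 0 := by
  rw [pad1_apply]; rw [dif_neg (by simp)]
lemma pad2_castAdd (v : Euc n₂) (i : Fin n₁) : pad2 n₁ n₂ v (Fin.castAdd n₂ i) = 0 := by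
  rw [pad2_apply]; rw [dif_pos (by simp [i.isLt])]
lemma pad2_natAdd (v : Euc n₂) (i : Fin n₂) : pad2 n₁ n₂ v (Fin.natAdd n₁ i) = v i := by
  rw [pad2_apply]; rw [dif_neg (by simp)]; exact congrArg (fun j => v j) (Fin.ext (by simp))

lemma inner_euc {n : ℕ} (a b : Euc n) : ⟪a, b⟫ = ∑ i, a i * b i := by
  simp [PiLp.inner_apply, RCLike.inner_apply]; exact Finset.sum_congr rfl fun i _ => mul_comm _ _

lemma inner_pad1 (u u' : Euc n₁) : ⟪pad1 n₁ n₂ u, pad1 n₁ n₂ u'⟫ = ⟪u, u'⟫ := by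
  rw [inner_euc, inner_euc, Fin.sum_univ_add]
  simp [pad1_castAdd, pad1_natAdd]
lemma inner_pad2 (v v' : Euc n₂) : ⟪pad2 n₁ n₂ v, pad2 n₁ n₂ v'⟫ = ⟪v, v'⟫ := by
  rw [inner_euc, inner_euc, Fin.sum_univ_add]
  simp [pad2_castAdd, pad2_natAdd]
lemma inner_pad1_pad2 (u : Euc n₁) (v : Euc n₂) : ⟪pad1 n₁ n₂ u, pad2 n₁ n₂ v⟫ = 0 := by
  rw [inner_euc, Fin.sum_univ_add]
  simp [pad1_castAdd, pad1_natAdd, pad2_castAdd, pad2_natAdd]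

lemma norm_pad1 (u : Euc n₁) : ‖pad1 n₁ n₂ u‖ = ‖u‖ := by
  rw [norm_eq_sqrt_real_inner (pad1 n₁ n₂ u), norm_eq_sqrt_real_inner u, inner_pad1]
lemma norm_pad2 (v : Euc n₂) : ‖pad2 n₁ n₂ v‖ = ‖v‖ := by
  rw [norm_eq_sqrt_real_inner (pad2 n₁ n₂ v), norm_eq_sqrt_real_inner v, inner_pad2]

lemma proj1_pad1 (u : Euc n₁) : proj1 n₁ n₂ (pad1 n₁ n₂ u) = u := by
  ext i; rw [proj1_apply, pad1_castAdd]
lemma proj2_pad2 (v : Euc n₂) : proj2 n₁ n₂ (pad2 n₁ n₂ v) = v := by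
  ext i; rw [proj2_apply, pad2_natAdd]
lemma proj1_pad2 (v : Euc n₂) : proj1 n₁ n₂ (pad2 n₁ n₂ v) = 0 := by
  ext i; rw [proj1_apply, pad2_castAdd]; rfl
lemma proj2_pad1 (u : Euc n₁) : proj2 n₁ n₂ (pad1 n₁ n₂ u) = 0 := by
  ext i; rw [proj2_apply, pad1_natAdd]; rfl

lemma pad1_smul (r : ℝ) (u : Euc n₁) : pad1 n₁ n₂ (r • u) = r • pad1 n₁ n₂ u := by
  ext i; rw [PiLp.smul_apply, pad1_apply, pad1_apply]
  split <;> simp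
lemma pad2_smul (r : ℝ) (v : Euc n₂) : pad2 n₁ n₂ (r • v) = r • pad2 n₁ n₂ v := by
  ext i; rw [PiLp.smul_apply, pad2_apply, pad2_apply]
  split <;> simp

lemma proj1_add (x y : Euc (n₁+n₂)) : proj1 n₁ n₂ (x + y) = proj1 n₁ n₂ x + proj1 n₁ n₂ y := by
  ext i; simp [proj1_apply]
lemma proj2_add (x y : Euc (n₁+n₂)) : proj2 n₁ n₂ (x + y) = proj2 n₁ n₂ x + proj2 n₁ n₂ y := by
  ext i; simp [proj2_apply]
lemma proj1_smul (r : ℝ) (x : Euc (n₁+n₂)) : proj1 n₁ n₂ (r • x) = r • proj1 n₁ n₂ x := by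
  ext i; simp [proj1_apply]
lemma proj2_smul (r : ℝ) (x : Euc (n₁+n₂)) : proj2 n₁ n₂ (r • x) = r • proj2 n₁ n₂ x := by
  ext i; simp [proj2_apply]

lemma pad_decomp (x : Euc (n₁+n₂)) :
    pad1 n₁ n₂ (proj1 n₁ n₂ x) + pad2 n₁ n₂ (proj2 n₁ n₂ x) = x := by
  ext i
  rw [PiLp.add_apply, pad1_apply, pad2_apply]
  by_cases h : (i:ℕ) < n₁
  · rw [dif_pos h, dif_pos h, proj1_apply, add_zero]
    exact congrArg x (Fin.ext rfl)
  · rw [dif_neg h, dif_neg h, proj2_apply, zero_add]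
    exact congrArg (fun j => x j) (Fin.ext (by simp only [Fin.coe_natAdd]; omega))

lemma inner_expand (a c : Euc n₁) (b d : Euc n₂) :
    ⟪pad1 n₁ n₂ a + pad2 n₁ n₂ b, pad1 n₁ n₂ c + pad2 n₁ n₂ d⟫ = ⟪a, c⟫ + ⟪b, d⟫ := by
  rw [inner_add_left, inner_add_right, inner_add_right, inner_pad1, inner_pad2,
    inner_pad1_pad2]
  have h0 : ⟪pad2 n₁ n₂ b, pad1 n₁ n₂ c⟫ = 0 := by
    rw [real_inner_comm]; exact inner_pad1_pad2 c b
  rw [h0]; ring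

lemma wedgeNorm_two {n : ℕ} (p q : Euc n) :
    wedgeNorm ![p, q] = Real.sqrt (⟪p,p⟫ * ⟪q,q⟫ - ⟪p,q⟫^2) := by
  unfold wedgeNorm
  congr 1
  rw [Matrix.det_fin_two]
  simp only [Matrix.of_apply, Matrix.cons_val_zero, Matrix.cons_val_one, Matrix.head_cons]
  rw [real_inner_comm q p]; ring

lemma wedge_smul_ortho {n : ℕ} (c : ℝ) (w₁ w₂ : Euc n) (h1 : ‖w₁‖ = 1) (h2 : ‖w₂‖ = 1)
    (h12 : ⟪w₁, w₂⟫ = 0) : wedgeNorm ![c • w₁, c • w₂] = c^2 := by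
  rw [wedgeNorm_two]
  simp only [real_inner_smul_left, real_inner_smul_right]
  rw [real_inner_self_eq_norm_sq, real_inner_self_eq_norm_sq, h1, h2, h12]
  rw [show c*(c*1^2)*(c*(c*1^2)) - (c*(c*0))^2 = (c^2)^2 by ring, Real.sqrt_sq (sq_nonneg c)]

lemma exists_ortho_pair {m : ℕ} (hm : 2 ≤ m) (a c : Euc m) (r : ℝ)
    (hA : ‖a‖ = r) (hC : ‖c‖ = r) (hT : ⟪a,c⟫ = 0) :
    ∃ u₁ u₂ : Euc m, ‖u₁‖ = 1 ∧ ‖u₂‖ = 1 ∧ ⟪u₁,u₂⟫ = 0 ∧ a = r • u₁ ∧ c = r • u₂ := by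
  rcases eq_or_ne r 0 with h0 | h0
  · subst h0
    have ha : a = 0 := norm_eq_zero.mp hA
    have hc : c = 0 := norm_eq_zero.mp hC
    refine ⟨EuclideanSpace.single ⟨0, by omega⟩ (1:ℝ),
      EuclideanSpace.single ⟨1, by omega⟩ (1:ℝ), ?_, ?_, ?_, by simp [ha], by simp [hc]⟩
    · simp [EuclideanSpace.norm_single]
    · simp [EuclideanSpace.norm_single]
    · rw [EuclideanSpace.inner_single_left]
      simp [EuclideanSpace.single_apply]
  · refine ⟨r⁻¹ • a, r⁻¹ • c, ?_, ?_, ?_, (smul_inv_smul₀ h0 a).symm, (smul_inv_smul₀ h0 c).symm⟩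
    · rw [norm_smul, hA, norm_inv, Real.norm_eq_abs]
      have : 0 ≤ r := hA ▸ norm_nonneg a
      rw [abs_of_nonneg this, inv_mul_cancel₀ h0]
    · rw [norm_smul, hC, norm_inv, Real.norm_eq_abs]
      have : 0 ≤ r := hC ▸ norm_nonneg c
      rw [abs_of_nonneg this, inv_mul_cancel₀ h0]
    · rw [real_inner_smul_left, real_inner_smul_right, hT, mul_zero, mul_zero]

set_option maxHeartbeats 1000000

lemma key_real (p q r s t : ℝ) (hp : 0 ≤ p) (hq : 0 ≤ q) (hr : 0 ≤ r) (hs : 0 ≤ s)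
    (h1 : p^2 + q^2 = 1) (h2 : r^2 + s^2 = 1)
    (ht1 : |t| ≤ p*r) (ht2 : |t| ≤ q*s)
    (hsum : Real.sqrt (p^2*r^2 - t^2) + Real.sqrt (q^2*s^2 - t^2) = 1) :
    t = 0 ∧ p = r ∧ q = s := by
  have habs := abs_nonneg t
  have hsq := sq_abs t
  have e1 : (0:ℝ) ≤ p^2*r^2 - t^2 := by nlinarith
  have e2 : (0:ℝ) ≤ q^2*s^2 - t^2 := by nlinarith
  have S1le : Real.sqrt (p^2*r^2 - t^2) ≤ p*r := by
    calc Real.sqrt (p^2*r^2 - t^2) ≤ Real.sqrt ((p*r)^2) :=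
          Real.sqrt_le_sqrt (by nlinarith)
      _ = p*r := Real.sqrt_sq (mul_nonneg hp hr)
  have S2le : Real.sqrt (q^2*s^2 - t^2) ≤ q*s := by
    calc Real.sqrt (q^2*s^2 - t^2) ≤ Real.sqrt ((q*s)^2) :=
          Real.sqrt_le_sqrt (by nlinarith)
      _ = q*s := Real.sqrt_sq (mul_nonneg hq hs)
  have g1 : p*r ≤ (p^2+r^2)/2 := by nlinarith [sq_nonneg (p-r)]
  have g2 : q*s ≤ (q^2+s^2)/2 := by nlinarith [sq_nonneg (q-s)]
  have E1 : Real.sqrt (p^2*r^2 - t^2) = (p^2+r^2)/2 := by linarith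
  have E2 : Real.sqrt (q^2*s^2 - t^2) = (q^2+s^2)/2 := by linarith
  have hpr : p = r := by
    have hle : (p-r)^2 ≤ 0 := by nlinarith
    have := sq_nonneg (p-r)
    have : (p-r)^2 = 0 := le_antisymm hle this
    have := (pow_eq_zero_iff two_ne_zero).mp this
    linarith
  have hqs : q = s := by
    have hle : (q-s)^2 ≤ 0 := by nlinarith
    have := sq_nonneg (q-s)
    have : (q-s)^2 = 0 := le_antisymm hle this
    have := (pow_eq_zero_iff two_ne_zero).mp this
    linarith
  refine ⟨?_, hpr, hqs⟩
  have hsq1 := Real.sq_sqrt e1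
  rw [E1] at hsq1
  subst hpr
  have ht0 : t^2 = 0 := by linear_combination hsq1
  exact (pow_eq_zero_iff two_ne_zero).mp ht0

end Helpers

set_option maxHeartbeats 1000000

/-- **Structure of unit simple 2-vectors with `|p¹ξ| + |p²ξ| = 1`.** For unit vectors
`x, y ∈ ℝ^{n₁+n₂}`, one has `|x∧y| = 1` and `|p¹x∧p¹y| + |p²x∧p²y| = 1` iff `x, y` can be
written as `x = cos α·u₁ + sin α·v₁`, `y = cos α·u₂ + sin α·v₂` with `u₁ ⊥ u₂` unit in `P¹`
and `v₁ ⊥ v₂` unit in `P²`. -/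
theorem unit_simple_two_vector_characterization
    (n₁ n₂ : ℕ) (h₁ : 2 ≤ n₁) (h₂ : 2 ≤ n₂)
    (x y : Euc (n₁ + n₂)) (hx : ‖x‖ = 1) (hy : ‖y‖ = 1) :
    (wedgeNorm ![x, y] = 1 ∧
      wedgeNorm ![projTo1 n₁ n₂ x, projTo1 n₁ n₂ y] +
        wedgeNorm ![projTo2 n₁ n₂ x, projTo2 n₁ n₂ y] = 1) ↔
    ∃ α ∈ Icc (0 : ℝ) (Real.pi / 2), ∃ u₁ u₂ v₁ v₂ : Euc (n₁ + n₂),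
      u₁ ∈ range (pad1 n₁ n₂) ∧ u₂ ∈ range (pad1 n₁ n₂) ∧
      v₁ ∈ range (pad2 n₁ n₂) ∧ v₂ ∈ range (pad2 n₁ n₂) ∧
      ‖u₁‖ = 1 ∧ ‖u₂‖ = 1 ∧ ‖v₁‖ = 1 ∧ ‖v₂‖ = 1 ∧
      ⟪u₁, u₂⟫ = 0 ∧ ⟪v₁, v₂⟫ = 0 ∧
      x = Real.cos α • u₁ + Real.sin α • v₁ ∧
      y = Real.cos α • u₂ + Real.sin α • v₂ := by
  have hxx : ⟪x,x⟫ = 1 := by rw [real_inner_self_eq_norm_sq, hx]; norm_num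
  have hyy : ⟪y,y⟫ = 1 := by rw [real_inner_self_eq_norm_sq, hy]; norm_num
  constructor
  · rintro ⟨hw, hsum⟩
    have hxyabs : |⟪x,y⟫| ≤ 1 := by
      have h := abs_real_inner_le_norm x y
      rw [hx, hy] at h; simpa using h
    have hxy : ⟪x,y⟫ = 0 := by
      rw [wedgeNorm_two, hxx, hyy] at hw
      have hnn : (0:ℝ) ≤ 1*1 - ⟪x,y⟫^2 := by nlinarith [sq_abs ⟪x,y⟫, abs_nonneg ⟪x,y⟫, sq_nonneg (1 - |⟪x,y⟫|)]
      have h := Real.sq_sqrt hnn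
      rw [hw] at h
      have h2 : ⟪x,y⟫^2 = 0 := by nlinarith
      exact (pow_eq_zero_iff two_ne_zero).mp h2
    set a₀ := proj1 n₁ n₂ x with ha₀
    set b₀ := proj2 n₁ n₂ x with hb₀
    set c₀ := proj1 n₁ n₂ y with hc₀
    set d₀ := proj2 n₁ n₂ y with hd₀
    have hxd : pad1 n₁ n₂ a₀ + pad2 n₁ n₂ b₀ = x := pad_decomp x
    have hyd : pad1 n₁ n₂ c₀ + pad2 n₁ n₂ d₀ = y := pad_decomp y
    have hA : ⟪a₀,a₀⟫ + ⟪b₀,b₀⟫ = 1 := by rw [← inner_expand, hxd]; exact hxx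
    have hC : ⟪c₀,c₀⟫ + ⟪d₀,d₀⟫ = 1 := by rw [← inner_expand, hyd]; exact hyy
    have hT : ⟪a₀,c₀⟫ + ⟪b₀,d₀⟫ = 0 := by rw [← inner_expand, hxd, hyd]; exact hxy
    have hp1x : projTo1 n₁ n₂ x = pad1 n₁ n₂ a₀ := rfl
    have hp1y : projTo1 n₁ n₂ y = pad1 n₁ n₂ c₀ := rfl
    have hp2x : projTo2 n₁ n₂ x = pad2 n₁ n₂ b₀ := rfl
    have hp2y : projTo2 n₁ n₂ y = pad2 n₁ n₂ d₀ := rfl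
    rw [hp1x, hp1y, hp2x, hp2y, wedgeNorm_two, wedgeNorm_two, inner_pad1, inner_pad1,
      inner_pad1, inner_pad2, inner_pad2, inner_pad2] at hsum
    rw [real_inner_self_eq_norm_sq, real_inner_self_eq_norm_sq] at hA hC
    rw [real_inner_self_eq_norm_sq a₀, real_inner_self_eq_norm_sq c₀,
      real_inner_self_eq_norm_sq b₀, real_inner_self_eq_norm_sq d₀] at hsum
    have hbd : ⟪b₀,d₀⟫ = -⟪a₀,c₀⟫ := by linarith
    have hcs1 := abs_real_inner_le_norm a₀ c₀
    have hcs2 := abs_real_inner_le_norm b₀ d₀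
    rw [hbd, abs_neg] at hcs2
    rw [hbd, neg_sq] at hsum
    obtain ⟨ht, hpr, hqs⟩ := key_real ‖a₀‖ ‖b₀‖ ‖c₀‖ ‖d₀‖ ⟪a₀,c₀⟫ (norm_nonneg _)
      (norm_nonneg _) (norm_nonneg _) (norm_nonneg _) hA hC hcs1 hcs2 hsum
    have hbd0 : ⟪b₀,d₀⟫ = 0 := by rw [hbd, ht, neg_zero]
    obtain ⟨u₁, u₂, hu1, hu2, huu, hau, hcu⟩ := exists_ortho_pair h₁ a₀ c₀ ‖a₀‖ rfl hpr.symm ht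
    obtain ⟨v₁, v₂, hv1, hv2, hvv, hbv, hdv⟩ :=
      exists_ortho_pair h₂ b₀ d₀ ‖b₀‖ rfl hqs.symm hbd0
    have hna : ‖a₀‖ ≤ 1 := by nlinarith [norm_nonneg b₀]
    have hpa : pad1 n₁ n₂ a₀ = ‖a₀‖ • pad1 n₁ n₂ u₁ := by rw [← pad1_smul, ← hau]
    have hpc : pad1 n₁ n₂ c₀ = ‖a₀‖ • pad1 n₁ n₂ u₂ := by rw [← pad1_smul, ← hcu]
    have hpb : pad2 n₁ n₂ b₀ = ‖b₀‖ • pad2 n₁ n₂ v₁ := by rw [← pad2_smul, ← hbv]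
    have hpd : pad2 n₁ n₂ d₀ = ‖b₀‖ • pad2 n₁ n₂ v₂ := by rw [← pad2_smul, ← hdv]
    have hcosa : Real.cos (Real.arccos ‖a₀‖) = ‖a₀‖ :=
      Real.cos_arccos (by linarith [norm_nonneg a₀]) hna
    have hsina : Real.sin (Real.arccos ‖a₀‖) = ‖b₀‖ := by
      rw [Real.sin_arccos, show (1:ℝ) - ‖a₀‖^2 = ‖b₀‖^2 by linarith,
        Real.sqrt_sq (norm_nonneg b₀)]
    refine ⟨Real.arccos ‖a₀‖, ⟨Real.arccos_nonneg _,
        Real.arccos_le_pi_div_two.mpr (norm_nonneg _)⟩,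
      pad1 n₁ n₂ u₁, pad1 n₁ n₂ u₂, pad2 n₁ n₂ v₁, pad2 n₁ n₂ v₂,
      ⟨u₁, rfl⟩, ⟨u₂, rfl⟩, ⟨v₁, rfl⟩, ⟨v₂, rfl⟩,
      by rw [norm_pad1, hu1], by rw [norm_pad1, hu2],
      by rw [norm_pad2, hv1], by rw [norm_pad2, hv2],
      by rw [inner_pad1]; exact huu, by rw [inner_pad2]; exact hvv, ?_, ?_⟩
    · rw [hcosa, hsina, ← hxd, hpa, hpb]
    · rw [hcosa, hsina, ← hyd, hpc, hpd]
  · rintro ⟨α, ⟨hα0, hα1⟩, U₁, U₂, V₁, V₂, ⟨u₁, rfl⟩, ⟨u₂, rfl⟩, ⟨v₁, rfl⟩, ⟨v₂, rfl⟩,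
      hn1, hn2, hn3, hn4, hUU, hVV, hxe, hye⟩
    have hcs : Real.cos α ^2 + Real.sin α ^2 = 1 := Real.cos_sq_add_sin_sq α
    have hxe' : x = pad1 n₁ n₂ (Real.cos α • u₁) + pad2 n₁ n₂ (Real.sin α • v₁) := by
      rw [pad1_smul, pad2_smul]; exact hxe
    have hye' : y = pad1 n₁ n₂ (Real.cos α • u₂) + pad2 n₁ n₂ (Real.sin α • v₂) := by
      rw [pad1_smul, pad2_smul]; exact hye
    have h1 : ⟪u₁,u₂⟫ = 0 := by rw [← inner_pad1 (n₂ := n₂)]; exact hUU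
    have h2 : ⟪v₁,v₂⟫ = 0 := by rw [← inner_pad2 (n₁ := n₁)]; exact hVV
    have hxy : ⟪x,y⟫ = 0 := by
      rw [hxe', hye', inner_expand, real_inner_smul_left, real_inner_smul_right,
        real_inner_smul_left, real_inner_smul_right, h1, h2]
      ring
    constructor
    · rw [wedgeNorm_two, hxx, hyy, hxy]; norm_num
    · have hP1x : projTo1 n₁ n₂ x = Real.cos α • pad1 n₁ n₂ u₁ := by
        show pad1 n₁ n₂ (proj1 n₁ n₂ x) = _
        rw [hxe', proj1_add, proj1_pad1, proj1_pad2, add_zero, pad1_smul]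
      have hP1y : projTo1 n₁ n₂ y = Real.cos α • pad1 n₁ n₂ u₂ := by
        show pad1 n₁ n₂ (proj1 n₁ n₂ y) = _
        rw [hye', proj1_add, proj1_pad1, proj1_pad2, add_zero, pad1_smul]
      have hP2x : projTo2 n₁ n₂ x = Real.sin α • pad2 n₁ n₂ v₁ := by
        show pad2 n₁ n₂ (proj2 n₁ n₂ x) = _
        rw [hxe', proj2_add, proj2_pad1, proj2_pad2, zero_add, pad2_smul]
      have hP2y : projTo2 n₁ n₂ y = Real.sin α • pad2 n₁ n₂ v₂ := by
        show pad2 n₁ n₂ (proj2 n₁ n₂ y) = _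
        rw [hye', proj2_add, proj2_pad1, proj2_pad2, zero_add, pad2_smul]
      rw [hP1x, hP1y, hP2x, hP2y, wedge_smul_ortho _ _ _ hn1 hn2 hUU,
        wedge_smul_ortho _ _ _ hn3 hn4 hVV]
      exact hcs

end
end

section
/- Let n₁, n₂ ≥ 2 and work in ℝ^{n₁+n₂} = ℝ^{n₁} × ℝ^{n₂}, with P¹ = ℝ^{n₁} × {0}, P² = {0} × ℝ^{n₂} and orthogonal projections p¹, p². Let x, y be unit vectors with |x∧y| = 1 and |p¹(x)∧p¹(y)| + |p²(x)∧p²(y)| = 1. If the 2-plane spanned by x and y is not contained in P¹, then |p²(x)∧p²(y)| > 0; in other words, the restriction of p² to span{x,y} is injective. -/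
open Set Metric MeasureTheory Filter Pointwise
open scoped ENNReal RealInnerProductSpace NNReal

noncomputable section

variable {n : ℕ}

section MyAux
variable {n₁ n₂ : ℕ}

lemma projTo1_apply (u : Euc (n₁ + n₂)) (i : Fin (n₁ + n₂)) :
    projTo1 n₁ n₂ u i = if (i : ℕ) < n₁ then u i else 0 := by
  show (if h : (i : ℕ) < n₁ then u (Fin.castAdd n₂ ⟨i, h⟩) else 0) = _
  split_ifs with h
  all_goals first | rfl | (congr 1; exact Fin.ext rfl)

lemma projTo2_apply (u : Euc (n₁ + n₂)) (i : Fin (n₁ + n₂)) :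
    projTo2 n₁ n₂ u i = if (i : ℕ) < n₁ then 0 else u i := by
  show (if h : (i : ℕ) < n₁ then 0 else u (Fin.natAdd n₁ ⟨(i:ℕ) - n₁, by omega⟩)) = _
  split_ifs with h
  all_goals first | rfl | (exact congrArg (fun j => u j) (show Fin.natAdd n₁ ⟨(i:ℕ) - n₁, by omega⟩ = i from Fin.ext (by show n₁ + ((i:ℕ) - n₁) = i; omega)))

lemma wedge_two (a b : Euc n₁) :
    wedgeNorm ![a, b] = Real.sqrt (⟪a,a⟫ * ⟪b,b⟫ - ⟪a,b⟫ * ⟪a,b⟫) := by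
  rw [wedgeNorm, Matrix.det_fin_two]
  simp only [Matrix.of_apply, Matrix.cons_val_zero, Matrix.cons_val_one, Matrix.head_cons]
  rw [real_inner_comm b a]

lemma inner_split (u v : Euc (n₁ + n₂)) :
    ⟪projTo1 n₁ n₂ u, projTo1 n₁ n₂ v⟫ + ⟪projTo2 n₁ n₂ u, projTo2 n₁ n₂ v⟫ = ⟪u, v⟫ := by
  simp only [PiLp.inner_apply, RCLike.inner_apply, conj_trivial, projTo1_apply, projTo2_apply]
  rw [← Finset.sum_add_distrib]
  congr 1; funext i
  split_ifs <;> ring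

lemma projTo2_linear (s t : ℝ) (u v : Euc (n₁ + n₂)) :
    projTo2 n₁ n₂ (s • u + t • v) = s • projTo2 n₁ n₂ u + t • projTo2 n₁ n₂ v := by
  ext i
  simp only [PiLp.add_apply, PiLp.smul_apply, projTo2_apply, smul_eq_mul]
  split_ifs <;> ring

end MyAux

/-- **Nondegeneracy of the second projection.** For unit vectors `x, y ∈ ℝ^{n₁+n₂}` with
`|x∧y| = 1` and `|p¹x∧p¹y| + |p²x∧p²y| = 1`, if `span{x,y}` is not contained in
`P¹ = ℝ^{n₁}×{0}`, then `|p²x∧p²y| > 0`; in other words `p²` is injective on `span{x,y}`. -/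
theorem second_projection_nondegenerate
    (n₁ n₂ : ℕ) (h₁ : 2 ≤ n₁) (h₂ : 2 ≤ n₂)
    (x y : Euc (n₁ + n₂)) (hx : ‖x‖ = 1) (hy : ‖y‖ = 1)
    (hxy : wedgeNorm ![x, y] = 1)
    (hsum : wedgeNorm ![projTo1 n₁ n₂ x, projTo1 n₁ n₂ y] +
      wedgeNorm ![projTo2 n₁ n₂ x, projTo2 n₁ n₂ y] = 1)
    (hnot : ¬ (Submodule.span ℝ {x, y} : Set (Euc (n₁ + n₂))) ⊆ range (pad1 n₁ n₂)) :
    0 < wedgeNorm ![projTo2 n₁ n₂ x, projTo2 n₁ n₂ y] ∧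
    InjOn (projTo2 n₁ n₂) (Submodule.span ℝ {x, y} : Set (Euc (n₁ + n₂))) := by
  have hxx : ⟪x, x⟫ = 1 := by
    rw [real_inner_self_eq_norm_mul_norm, hx]; norm_num
  have hyy : ⟪y, y⟫ = 1 := by
    rw [real_inner_self_eq_norm_mul_norm, hy]; norm_num
  set A := ⟪projTo1 n₁ n₂ x, projTo1 n₁ n₂ x⟫ with hA
  set B := ⟪projTo1 n₁ n₂ x, projTo1 n₁ n₂ y⟫ with hB
  set C := ⟪projTo1 n₁ n₂ y, projTo1 n₁ n₂ y⟫ with hC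
  set A' := ⟪projTo2 n₁ n₂ x, projTo2 n₁ n₂ x⟫ with hA'
  set B' := ⟪projTo2 n₁ n₂ x, projTo2 n₁ n₂ y⟫ with hB'
  set C' := ⟪projTo2 n₁ n₂ y, projTo2 n₁ n₂ y⟫ with hC'
  have hsA : A + A' = 1 := by rw [hA, hA', inner_split, hxx]
  have hsC : C + C' = 1 := by rw [hC, hC', inner_split, hyy]
  have hA0 : 0 ≤ A := real_inner_self_nonneg
  have hC0 : 0 ≤ C := real_inner_self_nonneg
  have hA'0 : 0 ≤ A' := real_inner_self_nonneg
  have hC'0 : 0 ≤ C' := real_inner_self_nonneg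
  rw [wedge_two, wedge_two, ← hA, ← hB, ← hC, ← hA', ← hB', ← hC'] at hsum
  -- key positivity of the second Gram determinant
  have hdet : 0 < A' * C' - B' * B' := by
    by_contra hle
    push_neg at hle
    have hz : Real.sqrt (A' * C' - B' * B') = 0 :=
      Real.sqrt_eq_zero_of_nonpos hle
    rw [hz, add_zero] at hsum
    have h1 : A * C - B * B = 1 := by
      have := Real.sqrt_eq_one.mp hsum
      linarith
    have hA'z : A' = 0 := by nlinarith
    have hC'z : C' = 0 := by nlinarith
    have hpx : projTo2 n₁ n₂ x = 0 := by
      have := inner_self_eq_zero (𝕜 := ℝ).mp (by rw [← hA']; exact hA'z)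
      exact this
    have hpy : projTo2 n₁ n₂ y = 0 := inner_self_eq_zero (𝕜 := ℝ).mp (by rw [← hC']; exact hC'z)
    apply hnot
    intro z hz'
    rw [SetLike.mem_coe, Submodule.mem_span_pair] at hz'
    obtain ⟨s, t, rfl⟩ := hz'
    refine ⟨proj1 n₁ n₂ (s • x + t • y), ?_⟩
    show projTo1 n₁ n₂ (s • x + t • y) = _
    ext i
    rw [projTo1_apply]
    split_ifs with h
    · rfl
    · have hxi : x i = 0 := by
        have h0 : projTo2 n₁ n₂ x i = (0 : Euc (n₁ + n₂)) i := by rw [hpx]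
        rw [projTo2_apply, if_neg h] at h0
        simpa using h0
      have hyi : y i = 0 := by
        have h0 : projTo2 n₁ n₂ y i = (0 : Euc (n₁ + n₂)) i := by rw [hpy]
        rw [projTo2_apply, if_neg h] at h0
        simpa using h0
      simp [PiLp.add_apply, PiLp.smul_apply, hxi, hyi]
  constructor
  · rw [wedge_two, ← hA', ← hB', ← hC']
    exact Real.sqrt_pos.mpr hdet
  · -- injectivity
    intro u hu v hv huv
    rw [SetLike.mem_coe, Submodule.mem_span_pair] at hu hv
    obtain ⟨s₁, t₁, rfl⟩ := hu
    obtain ⟨s₂, t₂, rfl⟩ := hv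
    rw [projTo2_linear, projTo2_linear] at huv
    have hcomm : ⟪projTo2 n₁ n₂ y, projTo2 n₁ n₂ x⟫ = B' := by
      rw [hB', real_inner_comm]
    have e1 : (s₁ - s₂) * A' + (t₁ - t₂) * B' = 0 := by
      have h3 := congrArg (fun w => ⟪w, projTo2 n₁ n₂ x⟫) huv
      simp only [inner_add_left, real_inner_smul_left] at h3
      rw [hcomm, ← hA'] at h3
      linarith
    have e2 : (s₁ - s₂) * B' + (t₁ - t₂) * C' = 0 := by
      have h3 := congrArg (fun w => ⟪w, projTo2 n₁ n₂ y⟫) huv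
      simp only [inner_add_left, real_inner_smul_left] at h3
      rw [← hB', ← hC'] at h3
      linarith
    have hs0 : (s₁ - s₂) * (A' * C' - B' * B') = 0 := by
      linear_combination C' * e1 - B' * e2
    have ht0 : (t₁ - t₂) * (A' * C' - B' * B') = 0 := by
      linear_combination A' * e2 - B' * e1
    have hs : s₁ = s₂ := by
      rcases mul_eq_zero.mp hs0 with h | h
      · linarith
      · linarith
    have ht : t₁ = t₂ := by
      rcases mul_eq_zero.mp ht0 with h | h
      · linarith
      · linarith
    rw [hs, ht]

end
end
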